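/- arXiv:1701.02815 — 3 statements merged into one kernel-verified Lean document; each statement's English description precedes it below -/
import Mathlib

section
/- (SGD for smooth nonconvex functions, unbiased case) Let H : R^p → R be L-Lipschitz smooth and bounded below by H(Θ*). Suppose iterates Θ_{i+1} = Θ_i − γ_i g_i where, conditioned on the past, E[g_i] = ∇H(Θ_i) and E[‖g_i − ∇H(Θ_i)‖²] ≤ σ². Then for any stepsizes with γ_i < 2/L, Σ_{i=1}^t (γ_i − (L/2)γ_i²) E[‖∇H(Θ_i)‖²] ≤ H(Θ_1) − H(Θ*) + (Lσ²/2) Σ_{i=1}^t γ_i². -/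
open MeasureTheory Finset

lemma cross_zero {p : ℕ} {Ω : Type*} {m m0 : MeasurableSpace Ω} (hm : m ≤ m0)
    (μ : Measure Ω) [IsProbabilityMeasure μ]
    (X Y : Ω → EuclideanSpace ℝ (Fin p))
    (hX : StronglyMeasurable[m] X)
    (hYm : AEStronglyMeasurable Y μ)
    (hX2 : Integrable (fun ω => ‖X ω‖ ^ 2) μ)
    (hY2 : Integrable (fun ω => ‖Y ω‖ ^ 2) μ)
    (hYint : Integrable Y μ)
    (hcond : μ[Y|m] =ᵐ[μ] 0) :
    ∫ ω, (inner ℝ (X ω) (Y ω) : ℝ) ∂μ = 0 := by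
  haveI : SigmaFinite (μ.trim hm) := by infer_instance
  have hXm0 : AEStronglyMeasurable X μ := (hX.mono hm).aestronglyMeasurable
  have habs : ∀ (v : EuclideanSpace ℝ (Fin p)) (j : Fin p), |v j| ≤ ‖v‖ := by
    intro v j
    have h1 : v j = (inner ℝ (EuclideanSpace.single j (1:ℝ)) v : ℝ) := by
      rw [EuclideanSpace.inner_single_left]; simp
    rw [h1]
    calc |(inner ℝ (EuclideanSpace.single j (1:ℝ)) v : ℝ)| ≤ ‖EuclideanSpace.single j (1:ℝ)‖ * ‖v‖ :=
          abs_real_inner_le_norm _ _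
      _ = ‖v‖ := by rw [EuclideanSpace.norm_single]; simp
  have hprodint : ∀ j : Fin p, Integrable (fun ω => X ω j * Y ω j) μ := by
    intro j
    refine ((hX2.add hY2).div_const 2).mono' ?_ ?_
    · exact ((PiLp.continuous_apply (p := 2) (β := fun _ : Fin p => ℝ) j).comp_aestronglyMeasurable hXm0).mul
        ((PiLp.continuous_apply (p := 2) (β := fun _ : Fin p => ℝ) j).comp_aestronglyMeasurable hYm)
    · filter_upwards with ω
      have h1 := habs (X ω) j
      have h2 := habs (Y ω) j
      have h3 := abs_nonneg (X ω j)
      have h4 := abs_nonneg (Y ω j)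
      have h6 := norm_nonneg (Y ω)
      simp only [Pi.add_apply]
      rw [Real.norm_eq_abs, abs_mul]
      nlinarith [sq_nonneg (‖X ω‖ - ‖Y ω‖)]
  have hYjint : ∀ j : Fin p, Integrable (fun ω => Y ω j) μ := by
    intro j
    have := (EuclideanSpace.proj j (𝕜 := ℝ)).integrable_comp hYint
    simpa using this
  have hYjcond : ∀ j : Fin p, (fun _ => (0:ℝ)) =ᵐ[μ] μ[fun ω => Y ω j|m] := by
    intro j
    refine ae_eq_condExp_of_forall_setIntegral_eq hm (hYjint j) ?_ ?_ ?_
    · intro s _ _; exact (integrable_const _).integrableOn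
    · intro s hs _
      have hint : ∫ ω in s, Y ω ∂μ = 0 := by
        calc ∫ ω in s, Y ω ∂μ = ∫ ω in s, (μ[Y|m]) ω ∂μ := (setIntegral_condExp hm hYint hs).symm
          _ = 0 := by rw [integral_congr_ae (ae_restrict_of_ae hcond)]; simp
      have hcc : ∫ ω in s, (EuclideanSpace.proj j (𝕜 := ℝ)) (Y ω) ∂μ
          = (EuclideanSpace.proj j (𝕜 := ℝ)) (∫ ω in s, Y ω ∂μ) :=
        ContinuousLinearMap.integral_comp_comm _ hYint.integrableOn
      rw [integral_zero]
      have heq : ∫ ω in s, Y ω j ∂μ = ∫ ω in s, (EuclideanSpace.proj j (𝕜 := ℝ)) (Y ω) ∂μ := by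
        rfl
      rw [heq, hcc, hint]
      simp
    · exact stronglyMeasurable_const.aestronglyMeasurable
  have hprodzero : ∀ j : Fin p, ∫ ω, X ω j * Y ω j ∂μ = 0 := by
    intro j
    have hXj : StronglyMeasurable[m] (fun ω => X ω j) :=
      (PiLp.continuous_apply (p := 2) (β := fun _ : Fin p => ℝ) j).comp_stronglyMeasurable hX
    have hprodint' : Integrable ((fun ω => X ω j) * fun ω => Y ω j) μ := hprodint j
    have hmul := condExp_mul_of_stronglyMeasurable_left hXj hprodint' (hYjint j)
    have hzero : (fun ω => X ω j) * μ[fun ω => Y ω j|m] =ᵐ[μ] fun _ => (0:ℝ) := by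
      filter_upwards [(hYjcond j).symm] with ω h
      simp [Pi.mul_apply, h]
    have key : ∫ ω, ((fun ω => X ω j) * fun ω => Y ω j) ω ∂μ = 0 := by
      rw [← integral_condExp hm, integral_congr_ae (hmul.trans hzero), integral_zero]
    simpa using key
  have hinner : ∀ ω, (inner ℝ (X ω) (Y ω) : ℝ) = ∑ j : Fin p, X ω j * Y ω j := by
    intro ω
    simp [PiLp.inner_apply, RCLike.inner_apply, conj_trivial, mul_comm]
  calc ∫ ω, (inner ℝ (X ω) (Y ω) : ℝ) ∂μ = ∫ ω, ∑ j : Fin p, X ω j * Y ω j ∂μ := by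
        simp_rw [hinner]
    _ = ∑ j : Fin p, ∫ ω, X ω j * Y ω j ∂μ := integral_finset_sum _ (fun j _ => hprodint j)
    _ = 0 := by simp [hprodzero]

lemma inner_integrable' {p : ℕ} {Ω : Type*} {m0 : MeasurableSpace Ω} {μ : Measure Ω}
    (X Y : Ω → EuclideanSpace ℝ (Fin p))
    (hX : AEStronglyMeasurable X μ) (hY : AEStronglyMeasurable Y μ)
    (hX2 : Integrable (fun ω => ‖X ω‖ ^ 2) μ)
    (hY2 : Integrable (fun ω => ‖Y ω‖ ^ 2) μ) :
    Integrable (fun ω => (inner ℝ (X ω) (Y ω) : ℝ)) μ := by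
  refine ((hX2.add hY2).div_const 2).mono' (hX.inner hY) ?_
  filter_upwards with ω
  have h1 := abs_real_inner_le_norm (X ω) (Y ω)
  have h2 := norm_nonneg (X ω)
  have h3 := norm_nonneg (Y ω)
  simp only [Pi.add_apply]
  rw [Real.norm_eq_abs]
  nlinarith [sq_nonneg (‖X ω‖ - ‖Y ω‖)]
lemma descent_bound {p : ℕ} (H : EuclideanSpace ℝ (Fin p) → ℝ) (L c : ℝ)
    (hsmooth : ∀ x y : EuclideanSpace ℝ (Fin p),
      H y ≤ H x + inner ℝ (gradient H x) (y - x) + L / 2 * ‖y - x‖ ^ 2)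
    (x v : EuclideanSpace ℝ (Fin p)) :
    H (x - c • v) ≤ H x - (c - L / 2 * c ^ 2) * ‖gradient H x‖ ^ 2
      + (L * c ^ 2 - c) * (inner ℝ (gradient H x) (v - gradient H x) : ℝ)
      + L / 2 * c ^ 2 * ‖v - gradient H x‖ ^ 2 := by
  have h0 := hsmooth x (x - c • v)
  have he : x - c • v - x = -(c • v) := by abel
  rw [he] at h0
  rw [inner_neg_right, real_inner_smul_right, norm_neg, norm_smul] at h0
  have hG : (inner ℝ (gradient H x) v : ℝ)
      = ‖gradient H x‖ ^ 2 + (inner ℝ (gradient H x) (v - gradient H x) : ℝ) := by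
    rw [inner_sub_right, real_inner_self_eq_norm_sq]; ring
  have hv : ‖v‖ ^ 2 = ‖gradient H x‖ ^ 2
      + 2 * (inner ℝ (gradient H x) (v - gradient H x) : ℝ) + ‖v - gradient H x‖ ^ 2 := by
    have : v = gradient H x + (v - gradient H x) := by abel
    nth_rewrite 1 [this]
    rw [norm_add_sq_real]
  have hnc : (‖c‖ * ‖v‖) ^ 2 = c ^ 2 * ‖v‖ ^ 2 := by
    rw [mul_pow, Real.norm_eq_abs, sq_abs]
  calc H (x - c • v) ≤ H x + -(c * (inner ℝ (gradient H x) v : ℝ)) + L / 2 * (‖c‖ * ‖v‖) ^ 2 := h0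
    _ = H x - (c - L / 2 * c ^ 2) * ‖gradient H x‖ ^ 2
        + (L * c ^ 2 - c) * (inner ℝ (gradient H x) (v - gradient H x) : ℝ)
        + L / 2 * c ^ 2 * ‖v - gradient H x‖ ^ 2 := by
        rw [hnc, hv, hG]; ring

theorem stmt_6 {p : ℕ}
    (Ω : Type*) [MeasurableSpace Ω] (μ : Measure Ω) [IsProbabilityMeasure μ]
    (ℱ : Filtration ℕ (inferInstance : MeasurableSpace Ω))
    (H : EuclideanSpace ℝ (Fin p) → ℝ) (L σ : ℝ) (hL : 0 < L)
    (Θstar : EuclideanSpace ℝ (Fin p))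
    -- L-Lipschitz smoothness (descent-lemma form):
    (hsmooth : ∀ x y : EuclideanSpace ℝ (Fin p),
      H y ≤ H x + inner ℝ (gradient H x) (y - x) + L / 2 * ‖y - x‖ ^ 2)
    (hgradLip : ∀ x y : EuclideanSpace ℝ (Fin p),
      ‖gradient H x - gradient H y‖ ≤ L * ‖x - y‖)
    -- bounded below by `H Θstar`:
    (hbelow : ∀ x, H Θstar ≤ H x)
    (t : ℕ) (γ : ℕ → ℝ)
    (Θ g : ℕ → Ω → EuclideanSpace ℝ (Fin p))
    -- deterministic initialization:
    (Θ₀ : EuclideanSpace ℝ (Fin p)) (hinit : ∀ ω, Θ 0 ω = Θ₀)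
    -- SGD iterates:
    (hiter : ∀ i, ∀ ω, Θ (i + 1) ω = Θ i ω - γ i • g i ω)
    -- adaptedness and integrability:
    (hadapted : ∀ i, StronglyMeasurable[ℱ i] (Θ i))
    (hgmeas : ∀ i, StronglyMeasurable[ℱ (i + 1)] (g i))
    (hgint : ∀ i, Integrable (g i) μ)
    (hsqint : ∀ i, Integrable (fun ω => ‖g i ω - gradient H (Θ i ω)‖ ^ 2) μ)
    (hHint : ∀ i, Integrable (fun ω => H (Θ i ω)) μ)
    (hgradsqint : ∀ i, Integrable (fun ω => ‖gradient H (Θ i ω)‖ ^ 2) μ)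
    -- unbiasedness: conditional expectation of `g i` given the past is the gradient:
    (hunbiased : ∀ i, μ[g i | ℱ i] =ᵐ[μ] fun ω => gradient H (Θ i ω))
    -- bounded variance:
    (hvar : ∀ i, ∫ ω, ‖g i ω - gradient H (Θ i ω)‖ ^ 2 ∂μ ≤ σ ^ 2)
    -- stepsize condition:
    (hstep : ∀ i, 0 < γ i ∧ γ i < 2 / L) :
    ∑ i ∈ range t, (γ i - L / 2 * (γ i) ^ 2) *
        ∫ ω, ‖gradient H (Θ i ω)‖ ^ 2 ∂μ
      ≤ H Θ₀ - H Θstar + L * σ ^ 2 / 2 * ∑ i ∈ range t, (γ i) ^ 2 := by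
  have hle : ∀ i, ℱ i ≤ (inferInstance : MeasurableSpace Ω) := fun i => ℱ.le i
  have hgradcont : Continuous (gradient H) := by
    have hlip : LipschitzWith (Real.toNNReal L) (gradient H) := by
      apply LipschitzWith.of_dist_le_mul
      intro x y
      rw [dist_eq_norm, dist_eq_norm]
      calc ‖gradient H x - gradient H y‖ ≤ L * ‖x - y‖ := hgradLip x y
        _ ≤ Real.toNNReal L * ‖x - y‖ := by
            gcongr
            exact Real.le_coe_toNNReal L
    exact hlip.continuous
  have hGmeas : ∀ i, StronglyMeasurable[ℱ i] (fun ω => gradient H (Θ i ω)) := fun i =>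
    hgradcont.comp_stronglyMeasurable (hadapted i)
  have hGaem : ∀ i, AEStronglyMeasurable (fun ω => gradient H (Θ i ω)) μ := fun i =>
    ((hGmeas i).mono (hle i)).aestronglyMeasurable
  have hgaem : ∀ i, AEStronglyMeasurable (g i) μ := fun i =>
    ((hgmeas i).mono (hle (i + 1))).aestronglyMeasurable
  have hGint : ∀ i, Integrable (fun ω => gradient H (Θ i ω)) μ := by
    intro i
    refine ((integrable_const (1:ℝ)).add (hgradsqint i)).mono' (hGaem i) ?_
    filter_upwards with ω
    simp only [Pi.add_apply]
    have := norm_nonneg (gradient H (Θ i ω))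
    nlinarith [sq_nonneg (‖gradient H (Θ i ω)‖ - 1)]
  have hYint : ∀ i, Integrable (fun ω => g i ω - gradient H (Θ i ω)) μ := fun i =>
    (hgint i).sub (hGint i)
  have hYaem : ∀ i, AEStronglyMeasurable (fun ω => g i ω - gradient H (Θ i ω)) μ := fun i =>
    (hgaem i).sub (hGaem i)
  have hcondY : ∀ i, μ[fun ω => g i ω - gradient H (Θ i ω)|ℱ i] =ᵐ[μ] 0 := by
    intro i
    have h1 := condExp_sub (m := ℱ i) (μ := μ) (hgint i) (hGint i)
    have h2 : μ[fun ω => gradient H (Θ i ω)|ℱ i] = fun ω => gradient H (Θ i ω) :=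
      condExp_of_stronglyMeasurable (hle i) (hGmeas i) (hGint i)
    refine h1.trans ?_
    rw [h2]
    filter_upwards [hunbiased i] with ω hω
    simp [Pi.sub_apply, hω]
  have hcross : ∀ i, ∫ ω, (inner ℝ (gradient H (Θ i ω)) (g i ω - gradient H (Θ i ω)) : ℝ) ∂μ = 0 :=
    fun i => cross_zero (hle i) μ _ _ (hGmeas i) (hYaem i) (hgradsqint i) (hsqint i)
      (hYint i) (hcondY i)
  have hcrossint : ∀ i,
      Integrable (fun ω => (inner ℝ (gradient H (Θ i ω)) (g i ω - gradient H (Θ i ω)) : ℝ)) μ :=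
    fun i => inner_integrable' _ _ (hGaem i) (hYaem i) (hgradsqint i) (hsqint i)
  -- key per-step inequality
  have hkey : ∀ i, (γ i - L / 2 * (γ i) ^ 2) * ∫ ω, ‖gradient H (Θ i ω)‖ ^ 2 ∂μ
      ≤ (∫ ω, H (Θ i ω) ∂μ) - (∫ ω, H (Θ (i + 1) ω) ∂μ) + L * σ ^ 2 / 2 * (γ i) ^ 2 := by
    intro i
    have hpt : ∀ ω, H (Θ (i + 1) ω) ≤ H (Θ i ω)
        - (γ i - L / 2 * (γ i) ^ 2) * ‖gradient H (Θ i ω)‖ ^ 2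
        + (L * (γ i) ^ 2 - γ i) * (inner ℝ (gradient H (Θ i ω)) (g i ω - gradient H (Θ i ω)) : ℝ)
        + L / 2 * (γ i) ^ 2 * ‖g i ω - gradient H (Θ i ω)‖ ^ 2 := by
      intro ω
      rw [hiter i ω]
      exact descent_bound H L (γ i) hsmooth (Θ i ω) (g i ω)
    have hRHSint : Integrable (fun ω => H (Θ i ω)
        - (γ i - L / 2 * (γ i) ^ 2) * ‖gradient H (Θ i ω)‖ ^ 2
        + (L * (γ i) ^ 2 - γ i) * (inner ℝ (gradient H (Θ i ω)) (g i ω - gradient H (Θ i ω)) : ℝ)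
        + L / 2 * (γ i) ^ 2 * ‖g i ω - gradient H (Θ i ω)‖ ^ 2) μ :=
      (((hHint i).sub ((hgradsqint i).const_mul _)).add ((hcrossint i).const_mul _)).add
        ((hsqint i).const_mul _)
    have h1 : ∫ ω, H (Θ (i + 1) ω) ∂μ ≤ ∫ ω, (H (Θ i ω)
        - (γ i - L / 2 * (γ i) ^ 2) * ‖gradient H (Θ i ω)‖ ^ 2
        + (L * (γ i) ^ 2 - γ i) * (inner ℝ (gradient H (Θ i ω)) (g i ω - gradient H (Θ i ω)) : ℝ)
        + L / 2 * (γ i) ^ 2 * ‖g i ω - gradient H (Θ i ω)‖ ^ 2) ∂μ :=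
      integral_mono (hHint (i + 1)) hRHSint hpt
    have h2 : ∫ ω, (H (Θ i ω)
        - (γ i - L / 2 * (γ i) ^ 2) * ‖gradient H (Θ i ω)‖ ^ 2
        + (L * (γ i) ^ 2 - γ i) * (inner ℝ (gradient H (Θ i ω)) (g i ω - gradient H (Θ i ω)) : ℝ)
        + L / 2 * (γ i) ^ 2 * ‖g i ω - gradient H (Θ i ω)‖ ^ 2) ∂μ
        = (∫ ω, H (Θ i ω) ∂μ)
        - (γ i - L / 2 * (γ i) ^ 2) * ∫ ω, ‖gradient H (Θ i ω)‖ ^ 2 ∂μ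
        + (L * (γ i) ^ 2 - γ i) * ∫ ω, (inner ℝ (gradient H (Θ i ω)) (g i ω - gradient H (Θ i ω)) : ℝ) ∂μ
        + L / 2 * (γ i) ^ 2 * ∫ ω, ‖g i ω - gradient H (Θ i ω)‖ ^ 2 ∂μ := by
      have e1 := integral_add (μ := μ)
        (f := fun ω => H (Θ i ω) - (γ i - L / 2 * (γ i) ^ 2) * ‖gradient H (Θ i ω)‖ ^ 2
          + (L * (γ i) ^ 2 - γ i) * (inner ℝ (gradient H (Θ i ω)) (g i ω - gradient H (Θ i ω)) : ℝ))
        (g := fun ω => L / 2 * (γ i) ^ 2 * ‖g i ω - gradient H (Θ i ω)‖ ^ 2)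
        (((hHint i).sub ((hgradsqint i).const_mul _)).add ((hcrossint i).const_mul _))
        ((hsqint i).const_mul _)
      have e2 := integral_add (μ := μ)
        (f := fun ω => H (Θ i ω) - (γ i - L / 2 * (γ i) ^ 2) * ‖gradient H (Θ i ω)‖ ^ 2)
        (g := fun ω => (L * (γ i) ^ 2 - γ i) * (inner ℝ (gradient H (Θ i ω)) (g i ω - gradient H (Θ i ω)) : ℝ))
        ((hHint i).sub ((hgradsqint i).const_mul _)) ((hcrossint i).const_mul _)
      have e3 := integral_sub (μ := μ)
        (f := fun ω => H (Θ i ω))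
        (g := fun ω => (γ i - L / 2 * (γ i) ^ 2) * ‖gradient H (Θ i ω)‖ ^ 2)
        (hHint i) ((hgradsqint i).const_mul _)
      rw [e1, e2, e3]
      simp only [integral_const_mul]
    rw [h2, hcross i] at h1
    have hcoef : 0 ≤ L / 2 * (γ i) ^ 2 := by positivity
    have hv := hvar i
    nlinarith [mul_le_mul_of_nonneg_left hv hcoef]
  -- telescoping sum
  have htel : ∀ n : ℕ, ∑ i ∈ range n, (γ i - L / 2 * (γ i) ^ 2) *
      ∫ ω, ‖gradient H (Θ i ω)‖ ^ 2 ∂μ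
      ≤ (∫ ω, H (Θ 0 ω) ∂μ) - (∫ ω, H (Θ n ω) ∂μ) + L * σ ^ 2 / 2 * ∑ i ∈ range n, (γ i) ^ 2 := by
    intro n
    induction n with
    | zero => simp
    | succ n ih =>
      rw [sum_range_succ, sum_range_succ]
      have := hkey n
      have hmul : L * σ ^ 2 / 2 * (∑ i ∈ range n, (γ i) ^ 2 + (γ n) ^ 2)
          = L * σ ^ 2 / 2 * ∑ i ∈ range n, (γ i) ^ 2 + L * σ ^ 2 / 2 * (γ n) ^ 2 := by ring
      rw [hmul]
      linarith
  have h0 : ∫ ω, H (Θ 0 ω) ∂μ = H Θ₀ := by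
    have : (fun ω => H (Θ 0 ω)) = fun _ => H Θ₀ := by
      funext ω; rw [hinit ω]
    rw [this, integral_const]
    simp
  have hlast : H Θstar ≤ ∫ ω, H (Θ t ω) ∂μ := by
    have := integral_mono (integrable_const (H Θstar)) (hHint t) (fun ω => hbelow (Θ t ω))
    rwa [integral_const, probReal_univ, one_smul] at this
  have := htel t
  rw [h0] at this
  linarith
end

section
/- If H is L-Lipschitz smooth and bounded below, the stochastic gradients are unbiased with variance bounded by σ², and the stepsizes are chosen as γ_i = c/√t for a constant c with c/√t < 2/L, then the randomly sampled iterate Θ_R with P(R = i) = (2γ_i − Lγ_i²)/Σ_{j=1}^t (2γ_j − Lγ_j²) satisfies E[‖∇H(Θ_R)‖²] = O(1/√t). -/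
open MeasureTheory Finset

lemma sgd_coord_le {p : ℕ} (x : EuclideanSpace ℝ (Fin p)) (k : Fin p) : |x k| ≤ ‖x‖ := by
  rw [EuclideanSpace.norm_eq]
  rw [← Real.sqrt_sq (abs_nonneg (x k))]
  apply Real.sqrt_le_sqrt
  rw [sq_abs]
  have := Finset.single_le_sum (f := fun i => ‖x i‖ ^ 2) (fun i _ => sq_nonneg _)
    (Finset.mem_univ k)
  simpa [Real.norm_eq_abs, sq_abs] using this


lemma sgd_int_proj {Ω : Type*} {mΩ : MeasurableSpace Ω} {μ : MeasureTheory.Measure Ω} {p : ℕ}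
    {e : Ω → EuclideanSpace ℝ (Fin p)} (heint : MeasureTheory.Integrable e μ) (k : Fin p) :
    MeasureTheory.Integrable (fun ω => e ω k) μ :=
  (ContinuousLinearMap.integrable_comp
    (EuclideanSpace.proj k : EuclideanSpace ℝ (Fin p) →L[ℝ] ℝ) heint).congr
    (by filter_upwards with ω; simp)

lemma sgd_integral_proj {Ω : Type*} {mΩ : MeasurableSpace Ω} {μ : MeasureTheory.Measure Ω} {p : ℕ}
    {e : Ω → EuclideanSpace ℝ (Fin p)} (heint : MeasureTheory.Integrable e μ) (k : Fin p) :
    ∫ ω, e ω k ∂μ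
      = (EuclideanSpace.proj k : EuclideanSpace ℝ (Fin p) →L[ℝ] ℝ) (∫ ω, e ω ∂μ) := by
  rw [← ContinuousLinearMap.integral_comp_comm
    (EuclideanSpace.proj k : EuclideanSpace ℝ (Fin p) →L[ℝ] ℝ) heint]
  exact MeasureTheory.integral_congr_ae (by filter_upwards with ω; simp)

lemma sgd_orth {Ω : Type*} [m0 : MeasurableSpace Ω] (μ : Measure Ω) [IsProbabilityMeasure μ]
    {m : MeasurableSpace Ω} (hm : m ≤ m0) {p : ℕ}
    {f g : Ω → EuclideanSpace ℝ (Fin p)}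
    (hfm : StronglyMeasurable[m] f) (hfint : Integrable f μ) (hgint : Integrable g μ)
    (hfsq : Integrable (fun ω => ‖f ω‖ ^ 2) μ)
    (hesq : Integrable (fun ω => ‖g ω - f ω‖ ^ 2) μ)
    (hcond : μ[g|m] =ᵐ[μ] f) :
    ∫ ω, (inner ℝ (f ω) (g ω - f ω) : ℝ) ∂μ = 0 := by
  haveI : SigmaFinite (μ.trim hm) := inferInstance
  set e : Ω → EuclideanSpace ℝ (Fin p) := fun ω => g ω - f ω with he
  have heint : Integrable e μ := hgint.sub hfint
  have hesq' : Integrable (fun ω => ‖e ω‖ ^ 2) μ := hesq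
  -- each coordinate of e has zero conditional expectation
  have hek : ∀ k : Fin p, μ[(fun ω => e ω k)|m] =ᵐ[μ] (0 : Ω → ℝ) := by
    intro k
    have hTe : Integrable (fun ω => e ω k) μ := sgd_int_proj heint k
    refine (ae_eq_condExp_of_forall_setIntegral_eq hm hTe
      (fun s _ _ => (integrable_zero Ω ℝ (μ.restrict s))) (fun s hs _ => ?_) ?_).symm
    · have h2 : ∫ ω in s, e ω ∂μ = 0 := by
        have hgf : ∫ ω in s, g ω ∂μ = ∫ ω in s, f ω ∂μ := by
          rw [← setIntegral_condExp hm hgint hs]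
          exact integral_congr_ae (ae_restrict_of_ae hcond)
        rw [he]
        rw [integral_sub hgint.restrict hfint.restrict, hgf, sub_self]
      have h1 : ∫ ω in s, e ω k ∂μ
          = (EuclideanSpace.proj k : EuclideanSpace ℝ (Fin p) →L[ℝ] ℝ)
            (∫ ω in s, e ω ∂μ) := sgd_integral_proj heint.restrict k
      rw [h1, h2]
      simp
    · exact stronglyMeasurable_const.aestronglyMeasurable
  have hfk : ∀ k : Fin p, StronglyMeasurable[m] (fun ω => f ω k) := fun k =>
    (EuclideanSpace.proj k : EuclideanSpace ℝ (Fin p) →L[ℝ] ℝ).continuous.comp_stronglyMeasurable hfm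
  have hekm : ∀ k : Fin p, Integrable (fun ω => e ω k) μ := fun k => sgd_int_proj heint k
  have hprod : ∀ k : Fin p,
      Integrable ((fun ω => f ω k) * (fun ω => e ω k)) μ := by
    intro k
    refine Integrable.mono' ((hfsq.add hesq').div_const 2)
      (((hfk k).mono hm).aestronglyMeasurable.mul (hekm k).aestronglyMeasurable) ?_
    filter_upwards with ω
    have h1 := sgd_coord_le (f ω) k
    have h2 := sgd_coord_le (e ω) k
    have h3 : ‖f ω k * e ω k‖ = |f ω k| * |e ω k| := by
      rw [Real.norm_eq_abs, abs_mul]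
    rw [Pi.mul_apply, h3]
    simp only [Pi.add_apply]
    nlinarith [abs_nonneg (f ω k), abs_nonneg (e ω k), norm_nonneg (f ω),
      norm_nonneg (e ω), sq_nonneg (‖f ω‖ - ‖e ω‖)]
  have hz : ∀ k : Fin p, ∫ ω, f ω k * e ω k ∂μ = 0 := by
    intro k
    have h1 := condExp_mul_of_stronglyMeasurable_left (μ := μ) (hfk k) (hprod k) (hekm k)
    have h2 : μ[(fun ω => f ω k) * fun ω => e ω k|m] =ᵐ[μ] (0 : Ω → ℝ) := by
      refine h1.trans ?_
      filter_upwards [hek k] with ω h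
      simp only [Pi.mul_apply, Pi.zero_apply, h, mul_zero]
    have h3 : ∫ ω, ((fun ω => f ω k) * fun ω => e ω k) ω ∂μ = 0 := by
      rw [← integral_condExp hm, integral_congr_ae h2]
      simp
    simpa using h3
  have hrw : (fun ω => (inner ℝ (f ω) (e ω) : ℝ)) = fun ω => ∑ k, f ω k * e ω k := by
    funext ω
    simp [PiLp.inner_apply, RCLike.inner_apply, conj_trivial]
    exact Finset.sum_congr rfl fun _ _ => mul_comm _ _
  rw [show ∫ ω, (inner ℝ (f ω) (g ω - f ω) : ℝ) ∂μ = ∫ ω, (inner ℝ (f ω) (e ω) : ℝ) ∂μ from rfl,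
    hrw, integral_finset_sum _ (fun k _ => by exact hprod k)]
  simp [hz]

set_option maxHeartbeats 1000000 in
theorem stmt_7 {p : ℕ}
    (Ω : Type*) [MeasurableSpace Ω] (μ : Measure Ω) [IsProbabilityMeasure μ]
    (ℱ : ℕ → Filtration ℕ (inferInstance : MeasurableSpace Ω))
    (H : EuclideanSpace ℝ (Fin p) → ℝ) (L σ c : ℝ) (hL : 0 < L) (hc : 0 < c)
    (Θstar : EuclideanSpace ℝ (Fin p))
    (hsmooth : ∀ x y : EuclideanSpace ℝ (Fin p),
      H y ≤ H x + inner ℝ (gradient H x) (y - x) + L / 2 * ‖y - x‖ ^ 2)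
    (hgradLip : ∀ x y : EuclideanSpace ℝ (Fin p),
      ‖gradient H x - gradient H y‖ ≤ L * ‖x - y‖)
    (hbelow : ∀ x, H Θstar ≤ H x)
    -- for each horizon `t`, a run of SGD with constant stepsize `γ t = c / √t`:
    (γ : ℕ → ℝ) (hγ : ∀ t, γ t = c / Real.sqrt t)
    (hstep : ∀ t : ℕ, 1 ≤ t → γ t < 2 / L)
    (Θ g : ℕ → ℕ → Ω → EuclideanSpace ℝ (Fin p))
    (Θ₀ : EuclideanSpace ℝ (Fin p)) (hinit : ∀ t, ∀ ω, Θ t 0 ω = Θ₀)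
    (hiter : ∀ t i, ∀ ω, Θ t (i + 1) ω = Θ t i ω - γ t • g t i ω)
    (hadapted : ∀ t i, StronglyMeasurable[(ℱ t) i] (Θ t i))
    (hgmeas : ∀ t i, StronglyMeasurable[(ℱ t) (i + 1)] (g t i))
    (hgint : ∀ t i, Integrable (g t i) μ)
    (hsqint : ∀ t i,
      Integrable (fun ω => ‖g t i ω - gradient H (Θ t i ω)‖ ^ 2) μ)
    (hHint : ∀ t i, Integrable (fun ω => H (Θ t i ω)) μ)
    (hgradsqint : ∀ t i, Integrable (fun ω => ‖gradient H (Θ t i ω)‖ ^ 2) μ)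
    (hunbiased : ∀ t i,
      μ[g t i | (ℱ t) i] =ᵐ[μ] fun ω => gradient H (Θ t i ω))
    (hvar : ∀ t i, ∫ ω, ‖g t i ω - gradient H (Θ t i ω)‖ ^ 2 ∂μ ≤ σ ^ 2) :
    -- `E‖∇H(Θ_R)‖²`, where `P(R = i) ∝ 2γᵢ - Lγᵢ²`, is `O(1/√t)`:
    ∃ C : ℝ, ∀ t : ℕ, 1 ≤ t →
      ∑ i ∈ range t,
          ((2 * γ t - L * (γ t) ^ 2) / ∑ j ∈ range t, (2 * γ t - L * (γ t) ^ 2)) *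
            ∫ ω, ‖gradient H (Θ t i ω)‖ ^ 2 ∂μ
        ≤ C / Real.sqrt t := by
  classical
  have hgradcont : Continuous (gradient H) := by
    have hlip : LipschitzWith (Real.toNNReal L) (gradient H) := by
      refine LipschitzWith.of_dist_le_mul fun x y => ?_
      rw [dist_eq_norm, dist_eq_norm, Real.coe_toNNReal L hL.le]
      exact hgradLip x y
    exact hlip.continuous
  set A : ℝ := H Θ₀ - H Θstar + L * c ^ 2 / 2 * σ ^ 2 with hA
  have hA0 : 0 ≤ A := by
    have h1 : 0 ≤ H Θ₀ - H Θstar := sub_nonneg.2 (hbelow Θ₀)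
    have h2 : 0 ≤ L * c ^ 2 / 2 * σ ^ 2 := by positivity
    simp only [hA]
    linarith
  have hLc : L * c < 2 := by
    have h1 := hstep 1 le_rfl
    rw [hγ 1] at h1
    simp only [Nat.cast_one, Real.sqrt_one, div_one] at h1
    rw [lt_div_iff₀ hL] at h1
    linarith
  refine ⟨2 * A / (c * (2 - L * c)), fun t ht => ?_⟩
  -- basic facts about `t` and `√t`
  set s : ℝ := Real.sqrt t with hs
  have ht0 : (0 : ℝ) < t := by exact_mod_cast ht
  have hs2 : s ^ 2 = (t : ℝ) := Real.sq_sqrt ht0.le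
  have hs0 : 0 < s := Real.sqrt_pos.2 ht0
  have hsne : s ≠ 0 := ne_of_gt (Real.sqrt_pos.2 ht0)
  have ht1 : (1:ℝ) ≤ (t:ℝ) := by exact_mod_cast ht
  have hs1 : 1 ≤ s := by nlinarith
  have hγs : γ t = c / s := hγ t
  have hγpos : 0 < γ t := by rw [hγs]; positivity
  have hγlt : L * γ t < 2 := by
    have h1 := hstep t ht
    rw [lt_div_iff₀ hL] at h1
    linarith
  have hw : 0 < 2 * γ t - L * γ t ^ 2 := by nlinarith
  -- measurability and integrability facts
  have hfm : ∀ i, StronglyMeasurable[(ℱ t) i] (fun ω => gradient H (Θ t i ω)) :=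
    fun i => hgradcont.comp_stronglyMeasurable (hadapted t i)
  have hfaesm : ∀ i, AEStronglyMeasurable (fun ω => gradient H (Θ t i ω)) μ :=
    fun i => ((hfm i).mono ((ℱ t).le i)).aestronglyMeasurable
  have hfint : ∀ i : ℕ, Integrable (fun ω => gradient H (Θ t i ω)) μ := by
    intro i
    refine Integrable.mono' ((integrable_const 1).add (hgradsqint t i)) (hfaesm i) ?_
    filter_upwards with ω
    have h1 : (0:ℝ) ≤ ‖gradient H (Θ t i ω)‖ := norm_nonneg _
    simp only [Pi.add_apply]
    nlinarith
  have hinner_int : ∀ i : ℕ, Integrable (fun ω =>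
      (inner ℝ (gradient H (Θ t i ω)) (g t i ω - gradient H (Θ t i ω)) : ℝ)) μ := by
    intro i
    refine Integrable.mono' (((hgradsqint t i).add (hsqint t i)).div_const 2)
      (AEStronglyMeasurable.inner (hfaesm i)
        (((hgint t i).aestronglyMeasurable).sub (hfaesm i))) ?_
    filter_upwards with ω
    have h1 := abs_real_inner_le_norm (gradient H (Θ t i ω))
      (g t i ω - gradient H (Θ t i ω))
    simp only [Pi.add_apply]
    rw [Real.norm_eq_abs]
    have h2 : (0:ℝ) ≤ ‖gradient H (Θ t i ω)‖ := norm_nonneg _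
    have h3 : (0:ℝ) ≤ ‖g t i ω - gradient H (Θ t i ω)‖ := norm_nonneg _
    nlinarith [sq_nonneg (‖gradient H (Θ t i ω)‖ - ‖g t i ω - gradient H (Θ t i ω)‖)]
  have horth : ∀ i : ℕ, ∫ ω,
      (inner ℝ (gradient H (Θ t i ω)) (g t i ω - gradient H (Θ t i ω)) : ℝ) ∂μ = 0 :=
    fun i => sgd_orth μ ((ℱ t).le i) (hfm i) (hfint i) (hgint t i)
      (hgradsqint t i) (hsqint t i) (hunbiased t i)
  -- the one-step descent inequality
  have hstep_i : ∀ i : ℕ, (γ t - L * γ t ^ 2 / 2) *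
        (∫ ω, ‖gradient H (Θ t i ω)‖ ^ 2 ∂μ)
      ≤ (∫ ω, H (Θ t i ω) ∂μ) - (∫ ω, H (Θ t (i + 1) ω) ∂μ)
        + L * γ t ^ 2 / 2 * σ ^ 2 := by
    intro i
    have hpt : ∀ ω, H (Θ t (i + 1) ω)
        ≤ H (Θ t i ω) + (L * γ t ^ 2 / 2 - γ t) * ‖gradient H (Θ t i ω)‖ ^ 2
          + (L * γ t ^ 2 - γ t) *
            (inner ℝ (gradient H (Θ t i ω)) (g t i ω - gradient H (Θ t i ω)) : ℝ)
          + L * γ t ^ 2 / 2 * ‖g t i ω - gradient H (Θ t i ω)‖ ^ 2 := by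
      intro ω
      rw [hiter t i ω]
      have h0 := hsmooth (Θ t i ω) (Θ t i ω - γ t • g t i ω)
      have e1 : Θ t i ω - γ t • g t i ω - Θ t i ω = -(γ t • g t i ω) := by abel
      rw [e1] at h0
      have e2 : (inner ℝ (gradient H (Θ t i ω)) (-(γ t • g t i ω)) : ℝ)
          = -(γ t * inner ℝ (gradient H (Θ t i ω)) (g t i ω)) := by
        rw [inner_neg_right, real_inner_smul_right]
      have e3 : ‖-(γ t • g t i ω)‖ ^ 2 = γ t ^ 2 * ‖g t i ω‖ ^ 2 := by
        rw [norm_neg, norm_smul, mul_pow, Real.norm_eq_abs, sq_abs]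
      rw [e2, e3] at h0
      have e4 : (inner ℝ (gradient H (Θ t i ω)) (g t i ω) : ℝ)
          = ‖gradient H (Θ t i ω)‖ ^ 2
            + (inner ℝ (gradient H (Θ t i ω)) (g t i ω - gradient H (Θ t i ω)) : ℝ) := by
        rw [inner_sub_right, real_inner_self_eq_norm_sq]
        ring
      have e5 : ‖g t i ω‖ ^ 2 = ‖gradient H (Θ t i ω)‖ ^ 2
          + 2 * (inner ℝ (gradient H (Θ t i ω)) (g t i ω - gradient H (Θ t i ω)) : ℝ)
          + ‖g t i ω - gradient H (Θ t i ω)‖ ^ 2 := by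
        have h5 := norm_add_sq_real (gradient H (Θ t i ω))
          (g t i ω - gradient H (Θ t i ω))
        rw [show gradient H (Θ t i ω) + (g t i ω - gradient H (Θ t i ω)) = g t i ω
          from by abel] at h5
        exact h5
      rw [e4, e5] at h0
      refine h0.trans_eq ?_
      ring
    have iH : Integrable (fun ω => H (Θ t i ω)) μ := hHint t i
    have iX : Integrable (fun ω =>
        (L * γ t ^ 2 / 2 - γ t) * ‖gradient H (Θ t i ω)‖ ^ 2) μ :=
      (hgradsqint t i).const_mul _
    have iY : Integrable (fun ω => (L * γ t ^ 2 - γ t) *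
        (inner ℝ (gradient H (Θ t i ω)) (g t i ω - gradient H (Θ t i ω)) : ℝ)) μ :=
      (hinner_int i).const_mul _
    have iZ : Integrable (fun ω =>
        L * γ t ^ 2 / 2 * ‖g t i ω - gradient H (Θ t i ω)‖ ^ 2) μ :=
      (hsqint t i).const_mul _
    have iHX : Integrable (fun ω => H (Θ t i ω)
        + (L * γ t ^ 2 / 2 - γ t) * ‖gradient H (Θ t i ω)‖ ^ 2) μ := iH.add iX
    have iHXY : Integrable (fun ω => H (Θ t i ω)
        + (L * γ t ^ 2 / 2 - γ t) * ‖gradient H (Θ t i ω)‖ ^ 2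
        + (L * γ t ^ 2 - γ t) *
          (inner ℝ (gradient H (Θ t i ω)) (g t i ω - gradient H (Θ t i ω)) : ℝ)) μ :=
      iHX.add iY
    have hintR : Integrable (fun ω =>
        H (Θ t i ω) + (L * γ t ^ 2 / 2 - γ t) * ‖gradient H (Θ t i ω)‖ ^ 2
          + (L * γ t ^ 2 - γ t) *
            (inner ℝ (gradient H (Θ t i ω)) (g t i ω - gradient H (Θ t i ω)) : ℝ)
          + L * γ t ^ 2 / 2 * ‖g t i ω - gradient H (Θ t i ω)‖ ^ 2) μ := iHXY.add iZ
    have hmono := integral_mono (hHint t (i + 1)) hintR fun ω => hpt ω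
    rw [integral_add iHXY iZ, integral_add iHX iY, integral_add iH iX,
      integral_const_mul, integral_const_mul, integral_const_mul, horth i] at hmono
    have hvle : L * γ t ^ 2 / 2 * (∫ ω, ‖g t i ω - gradient H (Θ t i ω)‖ ^ 2 ∂μ)
        ≤ L * γ t ^ 2 / 2 * σ ^ 2 :=
      mul_le_mul_of_nonneg_left (hvar t i) (by positivity)
    linarith [hmono, hvle]
  -- sum the descent inequality over the trajectory
  have hsum : (γ t - L * γ t ^ 2 / 2) *
      ∑ i ∈ range t, ∫ ω, ‖gradient H (Θ t i ω)‖ ^ 2 ∂μ ≤ A := by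
    have h1 : ∑ i ∈ range t, (γ t - L * γ t ^ 2 / 2) *
          (∫ ω, ‖gradient H (Θ t i ω)‖ ^ 2 ∂μ)
        ≤ ∑ i ∈ range t, ((∫ ω, H (Θ t i ω) ∂μ) - (∫ ω, H (Θ t (i + 1) ω) ∂μ)
            + L * γ t ^ 2 / 2 * σ ^ 2) :=
      Finset.sum_le_sum fun i _ => hstep_i i
    rw [← Finset.mul_sum, Finset.sum_add_distrib,
      Finset.sum_range_sub' (fun i => ∫ ω, H (Θ t i ω) ∂μ), Finset.sum_const,
      Finset.card_range, nsmul_eq_mul] at h1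
    have hEH0 : ∫ ω, H (Θ t 0 ω) ∂μ = H Θ₀ := by
      simp_rw [hinit t]
      simp
    have hEHt : H Θstar ≤ ∫ ω, H (Θ t t ω) ∂μ := by
      have h2 := integral_mono (integrable_const (H Θstar)) (hHint t t)
        fun ω => hbelow (Θ t t ω)
      simpa using h2
    have hγ2 : (t : ℝ) * (L * γ t ^ 2 / 2 * σ ^ 2) = L * c ^ 2 / 2 * σ ^ 2 := by
      rw [hγs, div_pow, ← hs2]
      field_simp
    rw [hEH0, hγ2] at h1
    simp only [hA]
    linarith [h1, hEHt]
  -- rewrite the sampling weights: they are all equal to `1/t`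
  have hwsum : ∑ j ∈ range t, (2 * γ t - L * γ t ^ 2)
      = (t : ℝ) * (2 * γ t - L * γ t ^ 2) := by
    rw [Finset.sum_const, Finset.card_range, nsmul_eq_mul]
  have hcoef : (2 * γ t - L * γ t ^ 2) / ((t : ℝ) * (2 * γ t - L * γ t ^ 2))
      = 1 / (t : ℝ) := by
    rw [div_eq_div_iff (mul_pos ht0 hw).ne' ht0.ne']
    ring
  rw [show (∑ i ∈ range t,
        ((2 * γ t - L * (γ t) ^ 2) / ∑ j ∈ range t, (2 * γ t - L * (γ t) ^ 2)) *
          ∫ ω, ‖gradient H (Θ t i ω)‖ ^ 2 ∂μ)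
      = (1 / (t : ℝ)) * ∑ i ∈ range t, ∫ ω, ‖gradient H (Θ t i ω)‖ ^ 2 ∂μ from by
    rw [hwsum, hcoef, Finset.mul_sum]]
  set S : ℝ := ∑ i ∈ range t, ∫ ω, ‖gradient H (Θ t i ω)‖ ^ 2 ∂μ with hSdef
  have hS0 : 0 ≤ S :=
    Finset.sum_nonneg fun i _ => integral_nonneg fun ω => sq_nonneg _
  -- clear denominators and finish with algebra
  have hkey2 : c * (2 * s - L * c) * S ≤ A * (2 * s ^ 2) := by
    have e : γ t - L * γ t ^ 2 / 2 = c * (2 * s - L * c) / (2 * s ^ 2) := by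
      rw [hγs]
      field_simp
    rw [e, div_mul_eq_mul_div, div_le_iff₀ (by positivity)] at hsum
    exact hsum
  have hden : 0 < c * (2 - L * c) := by nlinarith
  rw [one_div, inv_mul_eq_div, div_div, div_le_div_iff₀ ht0 (by positivity)]
  rw [← hs2]
  have key3 : 0 ≤ c * S * (L * c * (s - 1)) :=
    mul_nonneg (mul_nonneg hc.le hS0)
      (mul_nonneg (mul_nonneg hL.le hc.le) (by linarith))
  nlinarith [hkey2, key3]
end

section
/- Under the biased SGD bound with second moments bounded by σ², if γ_i = c/√t for all i = 1,…,t and Θ_R is sampled with P(R = i) = γ_i / Σ_{j=1}^t γ_j (i.e., uniformly when stepsizes are equal), then E[(Θ_R − Θ*)ᵀ g̃(Θ_R)] ≤ (E[‖Θ_1 − Θ*‖²] + σ² Σ_i γ_i²)/(2 Σ_i γ_i) = O(1/√t). -/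
open MeasureTheory Finset

lemma coord_sq_le {q : ℕ} (x : EuclideanSpace ℝ (Fin q)) (k : Fin q) :
    (x k) ^ 2 ≤ ‖x‖ ^ 2 := by
  rw [EuclideanSpace.norm_eq, Real.sq_sqrt (by positivity)]
  calc (x k) ^ 2 = ‖x k‖ ^ 2 := by rw [Real.norm_eq_abs, sq_abs]
    _ ≤ ∑ i, ‖x i‖ ^ 2 :=
      Finset.single_le_sum (f := fun i => ‖x i‖ ^ 2) (fun i _ => by positivity) (mem_univ k)

lemma aux_condexp_eval {Ω : Type*} {m m0 : MeasurableSpace Ω} (hm : m ≤ m0)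
    (μ : Measure Ω) [IsFiniteMeasure μ] {q : ℕ}
    (g : Ω → EuclideanSpace ℝ (Fin q)) (hg : Integrable g μ) (k : Fin q) :
    (fun ω => (μ[g|m]) ω k) =ᵐ[μ] μ[fun ω => g ω k|m] := by
  refine ae_eq_condExp_of_forall_setIntegral_eq hm
    ((EuclideanSpace.proj (𝕜 := ℝ) k).integrable_comp hg)
    (fun s _ _ => ((EuclideanSpace.proj (𝕜 := ℝ) k).integrable_comp integrable_condExp).integrableOn)
    (fun s hs hμs => ?_)
    (((EuclideanSpace.proj (𝕜 := ℝ) k).continuous.comp_stronglyMeasurable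
      stronglyMeasurable_condExp).aestronglyMeasurable)
  have key : ∫ x in s, (EuclideanSpace.proj (𝕜 := ℝ) k) ((μ[g|m]) x) ∂μ
      = ∫ x in s, (EuclideanSpace.proj (𝕜 := ℝ) k) (g x) ∂μ := by
    rw [(EuclideanSpace.proj (𝕜 := ℝ) k).integral_comp_comm integrable_condExp.integrableOn,
      (EuclideanSpace.proj (𝕜 := ℝ) k).integral_comp_comm hg.integrableOn,
      setIntegral_condExp hm hg hs]
  exact key

lemma aux_inner_integral {Ω : Type*} {m m0 : MeasurableSpace Ω} (hm : m ≤ m0)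
    {μ : Measure Ω} [IsFiniteMeasure μ] {q : ℕ}
    (X g G : Ω → EuclideanSpace ℝ (Fin q))
    (hX : StronglyMeasurable[m] X)
    (hg : Integrable g μ)
    (hXsq : Integrable (fun ω => ‖X ω‖ ^ 2) μ)
    (hgsq : Integrable (fun ω => ‖g ω‖ ^ 2) μ)
    (hG : μ[g|m] =ᵐ[μ] G) :
    ∫ ω, (inner ℝ (X ω) (g ω) : ℝ) ∂μ = ∫ ω, (inner ℝ (X ω) (G ω) : ℝ) ∂μ := by
  have hdom : Integrable (fun ω => (‖X ω‖ ^ 2 + ‖g ω‖ ^ 2) / 2) μ := (hXsq.add hgsq).div_const 2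
  have key : ∀ k : Fin q, (Integrable (fun ω => X ω k * g ω k) μ ∧
      Integrable (fun ω => X ω k * G ω k) μ) ∧
      ∫ ω, X ω k * g ω k ∂μ = ∫ ω, X ω k * G ω k ∂μ := by
    intro k
    have hXk : StronglyMeasurable[m] (fun ω => X ω k) :=
      (EuclideanSpace.proj (𝕜 := ℝ) k).continuous.comp_stronglyMeasurable hX
    have hgk : Integrable (fun ω => g ω k) μ := (EuclideanSpace.proj (𝕜 := ℝ) k).integrable_comp hg
    have hprod : Integrable (fun ω => X ω k * g ω k) μ := by
      refine hdom.mono' ((hXk.mono hm).aestronglyMeasurable.mul hgk.1)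
        (Filter.Eventually.of_forall fun ω => ?_)
      have h1 := coord_sq_le (X ω) k
      have h2 := coord_sq_le (g ω) k
      have h3 : |X ω k * g ω k| ≤ (‖X ω‖ ^ 2 + ‖g ω‖ ^ 2) / 2 := by
        rw [abs_mul]
        nlinarith [sq_nonneg (|X ω k| - |g ω k|), sq_abs (X ω k), sq_abs (g ω k),
          abs_nonneg (X ω k), abs_nonneg (g ω k)]
      simpa [Real.norm_eq_abs, abs_mul] using h3
    have hpull : μ[(fun ω => X ω k) * (fun ω => g ω k)|m]
        =ᵐ[μ] (fun ω => X ω k) * μ[fun ω => g ω k|m] :=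
      condExp_mul_of_stronglyMeasurable_left hXk hprod hgk
    have hck := aux_condexp_eval hm μ g hg k
    have hGk : μ[fun ω => g ω k|m] =ᵐ[μ] fun ω => G ω k :=
      hck.symm.trans (hG.mono fun ω h => congrArg (fun v : EuclideanSpace ℝ (Fin q) => v k) h)
    have heq2 : μ[(fun ω => X ω k * g ω k)|m] =ᵐ[μ] fun ω => X ω k * G ω k := by
      refine hpull.trans ?_
      filter_upwards [hGk] with ω h
      simp [h]
    have hint2 : Integrable (fun ω => X ω k * G ω k) μ := integrable_condExp.congr heq2
    refine ⟨⟨hprod, hint2⟩, ?_⟩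
    rw [← integral_condExp hm (f := fun ω => X ω k * g ω k), integral_congr_ae heq2]
  simp_rw [PiLp.inner_apply, RCLike.inner_apply, conj_trivial,
    fun (ω : Ω) (x : Fin q) => mul_comm ((g ω).ofLp x) ((X ω).ofLp x),
    fun (ω : Ω) (x : Fin q) => mul_comm ((G ω).ofLp x) ((X ω).ofLp x)]
  rw [integral_finset_sum _ (fun k _ => (key k).1.1), integral_finset_sum _ (fun k _ => (key k).1.2)]
  exact Finset.sum_congr rfl fun k _ => (key k).2

theorem stmt_9 {p : ℕ}
    (Ω : Type*) [MeasurableSpace Ω] (μ : Measure Ω) [IsProbabilityMeasure μ]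
    (ℱ : ℕ → Filtration ℕ (inferInstance : MeasurableSpace Ω))
    (Θstar : EuclideanSpace ℝ (Fin p)) (σ c : ℝ) (hc : 0 < c)
    -- for each horizon `t`, a run with constant stepsize `γ t = c / √t`:
    (γ : ℕ → ℝ) (hγ : ∀ t, γ t = c / Real.sqrt t)
    (Θ ghat : ℕ → ℕ → Ω → EuclideanSpace ℝ (Fin p))
    (gtil : EuclideanSpace ℝ (Fin p) → EuclideanSpace ℝ (Fin p))
    (hiter : ∀ t i, ∀ ω, Θ t (i + 1) ω = Θ t i ω - γ t • ghat t i ω)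
    (hadapted : ∀ t i, StronglyMeasurable[(ℱ t) i] (Θ t i))
    (hgmeas : ∀ t i, StronglyMeasurable[(ℱ t) (i + 1)] (ghat t i))
    (hgint : ∀ t i, Integrable (ghat t i) μ)
    (hsqint : ∀ t i, Integrable (fun ω => ‖ghat t i ω‖ ^ 2) μ)
    (hdistint : ∀ t i, Integrable (fun ω => ‖Θ t i ω - Θstar‖ ^ 2) μ)
    (hipint : ∀ t i,
      Integrable (fun ω => (inner ℝ (Θ t i ω - Θstar) (gtil (Θ t i ω)) : ℝ)) μ)
    (hmean : ∀ t i, μ[ghat t i | (ℱ t) i] =ᵐ[μ] fun ω => gtil (Θ t i ω))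
    (hvar : ∀ t i, ∫ ω, ‖ghat t i ω‖ ^ 2 ∂μ ≤ σ ^ 2)
    -- identical deterministic initialization for every horizon:
    (Θ₀ : EuclideanSpace ℝ (Fin p)) (hinit : ∀ t, ∀ ω, Θ t 0 ω = Θ₀) :
    -- `E[(Θ_R − Θ*)ᵀ g̃(Θ_R)]` with `P(R = i) = γᵢ / Σⱼ γⱼ` obeys the stated bound
    -- and is `O(1/√t)`:
    (∀ t : ℕ, 1 ≤ t →
      ∑ i ∈ range t, (γ t / ∑ j ∈ range t, γ t) *
          ∫ ω, (inner ℝ (Θ t i ω - Θstar) (gtil (Θ t i ω)) : ℝ) ∂μ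
        ≤ ((∫ ω, ‖Θ t 0 ω - Θstar‖ ^ 2 ∂μ) + σ ^ 2 * ∑ i ∈ range t, (γ t) ^ 2) /
            (2 * ∑ i ∈ range t, γ t)) ∧
    ∃ C : ℝ, ∀ t : ℕ, 1 ≤ t →
      ∑ i ∈ range t, (γ t / ∑ j ∈ range t, γ t) *
          ∫ ω, (inner ℝ (Θ t i ω - Θstar) (gtil (Θ t i ω)) : ℝ) ∂μ
        ≤ C / Real.sqrt t := by
  have main : ∀ t : ℕ, 1 ≤ t →
      ∑ i ∈ range t, (γ t / ∑ j ∈ range t, γ t) *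
          ∫ ω, (inner ℝ (Θ t i ω - Θstar) (gtil (Θ t i ω)) : ℝ) ∂μ
        ≤ ((∫ ω, ‖Θ t 0 ω - Θstar‖ ^ 2 ∂μ) + σ ^ 2 * ∑ i ∈ range t, (γ t) ^ 2) /
            (2 * ∑ i ∈ range t, γ t) := by
    intro t ht
    have ht0 : (0 : ℝ) < t := by exact_mod_cast ht
    have hst : 0 < Real.sqrt t := Real.sqrt_pos.2 ht0
    have hγt : 0 < γ t := by rw [hγ]; positivity
    have hSval : ∑ j ∈ range t, γ t = t * γ t := by
      rw [Finset.sum_const, card_range, nsmul_eq_mul]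
    have hSpos : 0 < ∑ j ∈ range t, γ t := by rw [hSval]; positivity
    set A : ℕ → ℝ := fun i => ∫ ω, ‖Θ t i ω - Θstar‖ ^ 2 ∂μ with hA
    set B : ℕ → ℝ := fun i => ∫ ω, (inner ℝ (Θ t i ω - Θstar) (gtil (Θ t i ω)) : ℝ) ∂μ with hB
    have step : ∀ i, 2 * γ t * B i ≤ A i - A (i + 1) + γ t ^ 2 * σ ^ 2 := by
      intro i
      have hm := (ℱ t).le i
      have hX : StronglyMeasurable[(ℱ t) i] (fun ω => Θ t i ω - Θstar) :=
        (hadapted t i).sub stronglyMeasurable_const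
      have hswap : ∫ ω, (inner ℝ (Θ t i ω - Θstar) (ghat t i ω) : ℝ) ∂μ = B i :=
        aux_inner_integral hm (fun ω => Θ t i ω - Θstar) (ghat t i)
          (fun ω => gtil (Θ t i ω)) hX (hgint t i) (hdistint t i) (hsqint t i) (hmean t i)
      have hinnerInt : Integrable (fun ω => (inner ℝ (Θ t i ω - Θstar) (ghat t i ω) : ℝ)) μ := by
        refine (((hdistint t i).add (hsqint t i)).div_const 2).mono'
          ((hX.mono hm).aestronglyMeasurable.inner (hgint t i).1)
          (Filter.Eventually.of_forall fun ω => ?_)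
        have h1 := abs_real_inner_le_norm (Θ t i ω - Θstar) (ghat t i ω)
        simp only [Real.norm_eq_abs, Pi.add_apply]
        nlinarith [norm_nonneg (Θ t i ω - Θstar), norm_nonneg (ghat t i ω),
          sq_nonneg (‖Θ t i ω - Θstar‖ - ‖ghat t i ω‖)]
      have hexp : A (i + 1)
          = A i - 2 * γ t * (∫ ω, (inner ℝ (Θ t i ω - Θstar) (ghat t i ω) : ℝ) ∂μ)
            + γ t ^ 2 * (∫ ω, ‖ghat t i ω‖ ^ 2 ∂μ) := by
        have hpt : ∀ ω, ‖Θ t (i + 1) ω - Θstar‖ ^ 2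
            = ‖Θ t i ω - Θstar‖ ^ 2 - 2 * γ t * (inner ℝ (Θ t i ω - Θstar) (ghat t i ω) : ℝ)
              + γ t ^ 2 * ‖ghat t i ω‖ ^ 2 := by
          intro ω
          rw [hiter t i ω]
          have h4 : Θ t i ω - γ t • ghat t i ω - Θstar
              = (Θ t i ω - Θstar) - γ t • ghat t i ω := by abel
          rw [h4, norm_sub_sq_real, real_inner_smul_right, norm_smul, mul_pow]
          simp only [Real.norm_eq_abs, sq_abs]
          ring
        have i2 : Integrable (fun ω => 2 * γ t * (inner ℝ (Θ t i ω - Θstar) (ghat t i ω) : ℝ)) μ :=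
          hinnerInt.const_mul _
        have i1 : Integrable (fun ω => ‖Θ t i ω - Θstar‖ ^ 2
            - 2 * γ t * (inner ℝ (Θ t i ω - Θstar) (ghat t i ω) : ℝ)) μ := (hdistint t i).sub i2
        have i3 : Integrable (fun ω => γ t ^ 2 * ‖ghat t i ω‖ ^ 2) μ := (hsqint t i).const_mul _
        simp only [hA]
        simp_rw [hpt]
        rw [integral_add i1 i3, integral_sub (hdistint t i) i2, integral_const_mul,
          integral_const_mul]
      have hv := hvar t i
      have hsqγ : (0 : ℝ) ≤ γ t ^ 2 := sq_nonneg _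
      nlinarith [hexp, hswap]
    have hAt : 0 ≤ A t := integral_nonneg fun ω => sq_nonneg _
    have hsum : ∑ i ∈ range t, 2 * γ t * B i ≤ A 0 + ∑ i ∈ range t, γ t ^ 2 * σ ^ 2 := by
      calc ∑ i ∈ range t, 2 * γ t * B i
          ≤ ∑ i ∈ range t, (A i - A (i + 1) + γ t ^ 2 * σ ^ 2) :=
            Finset.sum_le_sum fun i _ => step i
        _ = (A 0 - A t) + ∑ i ∈ range t, γ t ^ 2 * σ ^ 2 := by
            rw [Finset.sum_add_distrib, Finset.sum_range_sub' A]
        _ ≤ A 0 + ∑ i ∈ range t, γ t ^ 2 * σ ^ 2 := by linarith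
    have hconst : ∑ i ∈ range t, γ t ^ 2 * σ ^ 2 = σ ^ 2 * ∑ i ∈ range t, γ t ^ 2 := by
      rw [Finset.sum_const, Finset.sum_const, card_range, nsmul_eq_mul, nsmul_eq_mul]; ring
    have hLHS : ∑ i ∈ range t, (γ t / ∑ j ∈ range t, γ t) * B i
        = (∑ i ∈ range t, 2 * γ t * B i) / (2 * ∑ j ∈ range t, γ t) := by
      rw [Finset.sum_div, Finset.sum_congr rfl]
      intro i _
      field_simp
    rw [hLHS]
    rw [div_le_div_iff₀ (by positivity) (by positivity)]
    calc (∑ i ∈ range t, 2 * γ t * B i) * (2 * ∑ j ∈ range t, γ t)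
        ≤ (A 0 + σ ^ 2 * ∑ i ∈ range t, γ t ^ 2) * (2 * ∑ j ∈ range t, γ t) := by
          apply mul_le_mul_of_nonneg_right _ (by positivity)
          rw [← hconst]; exact hsum
      _ = _ := rfl
  refine ⟨main, ⟨(‖Θ₀ - Θstar‖ ^ 2 + σ ^ 2 * c ^ 2) / (2 * c), ?_⟩⟩
  intro t ht
  refine (main t ht).trans (le_of_eq ?_)
  have ht0 : (0 : ℝ) < t := by exact_mod_cast ht
  have hst : 0 < Real.sqrt t := Real.sqrt_pos.2 ht0
  have hsq : Real.sqrt t * Real.sqrt t = t := Real.mul_self_sqrt ht0.le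
  have hA0 : ∫ ω, ‖Θ t 0 ω - Θstar‖ ^ 2 ∂μ = ‖Θ₀ - Θstar‖ ^ 2 := by
    simp_rw [hinit t]
    simp
  have h1 : ∑ i ∈ range t, (γ t) ^ 2 = c ^ 2 := by
    rw [Finset.sum_const, card_range, nsmul_eq_mul, hγ, div_pow, Real.sq_sqrt ht0.le]
    field_simp
  have h2 : ∑ j ∈ range t, γ t = c * Real.sqrt t := by
    rw [Finset.sum_const, card_range, nsmul_eq_mul, hγ, mul_comm, div_mul_eq_mul_div,
      mul_div_assoc, Real.div_sqrt]
  rw [hA0, h1, h2, div_div]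
  ring_nf
end
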